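/- Let z be a complex number and β a real number with β > |z|. Then Re(z/(β - z)) ≥ -|z|/(β + |z|). -/

import Mathlib

theorem re_div_lower_bound (z : ℂ) (β : ℝ) (h : β > ‖z‖) :
    (z / ((β : ℂ) - z)).re ≥ -‖z‖ / (β + ‖z‖) := by
  set r := ‖z‖ with hr
  have hr0 : 0 ≤ r := norm_nonneg z
  have hre : z.re ≥ -r := by
    have h1 := abs_le.mp (Complex.abs_re_le_norm z)
    linarith [h1.1]
  have hsq : z.re ^ 2 + z.im ^ 2 = r ^ 2 := by
    rw [hr, Complex.sq_norm, Complex.normSq_apply]; ring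
  have hN : 0 < Complex.normSq ((β : ℂ) - z) := by
    apply Complex.normSq_pos.mpr
    intro hz
    have hzβ : z = (β : ℂ) := (sub_eq_zero.mp hz).symm
    rw [hzβ, Complex.norm_real, Real.norm_eq_abs, abs_of_nonneg (by linarith)] at hr
    linarith
  have hNval : Complex.normSq ((β : ℂ) - z) = (β - z.re) ^ 2 + z.im ^ 2 := by
    rw [Complex.normSq_apply]; simp; ring
  rw [Complex.div_re]
  simp only [Complex.sub_re, Complex.sub_im, Complex.ofReal_re, Complex.ofReal_im, zero_sub]
  rw [← add_div, ge_iff_le, div_le_div_iff₀ (by linarith) hN]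
  nlinarith [hN, hNval, hsq, sq_nonneg z.im, mul_nonneg (mul_nonneg (le_of_lt (show (0:ℝ) < β by linarith)) (by linarith : (0:ℝ) ≤ β - r)) (by linarith : (0:ℝ) ≤ z.re + r)]
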